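/- For every triple (a, b, c) ∈ C³ there exist matrices A, B ∈ SL_2(C) with tr(A) = a, tr(B) = b, and tr(AB) = c. That is, the trace-coordinate map SL_2(C) × SL_2(C) → C³, (A, B) ↦ (tr A, tr B, tr AB), is surjective. -/

import Mathlib

open Matrix

/-- For every `(a, b, c) ∈ ℂ³` there exist `A, B ∈ SL₂(ℂ)` with `tr A = a`, `tr B = b`,
and `tr(AB) = c`; i.e. the trace-coordinate map `SL₂(ℂ) × SL₂(ℂ) → ℂ³` is surjective. -/
theorem sl2_trace_coordinates_surjective (a b c : ℂ) :
    ∃ A B : Matrix.SpecialLinearGroup (Fin 2) ℂ,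
      Matrix.trace ((A : Matrix (Fin 2) (Fin 2) ℂ)) = a ∧
      Matrix.trace ((B : Matrix (Fin 2) (Fin 2) ℂ)) = b ∧
      Matrix.trace ((A * B : Matrix.SpecialLinearGroup (Fin 2) ℂ) :
        Matrix (Fin 2) (Fin 2) ℂ) = c := by
  obtain ⟨s, hs⟩ : ∃ s : ℂ, s ^ 2 = c ^ 2 - 4 := IsAlgClosed.exists_pow_nat_eq (c ^ 2 - 4) two_pos
  set μ : ℂ := (c + s) / 2 with hμ
  set ν : ℂ := (c - s) / 2 with hν
  have hmul : μ * ν = 1 := by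
    have : s ^ 2 = c ^ 2 - 4 := hs
    field_simp [hμ, hν]
    linear_combination (-1/4 : ℂ) * this
  refine ⟨⟨!![a, -1; 1, 0], by simp [Matrix.det_fin_two_of]⟩,
    ⟨!![0, μ; -ν, b], by simp [Matrix.det_fin_two_of, hmul]⟩, ?_, ?_, ?_⟩
  · simp [Matrix.trace_fin_two_of]
  · simp [Matrix.trace_fin_two_of]
  · show Matrix.trace (!![a, -1; 1, 0] * !![0, μ; -ν, b]) = c
    rw [show (!![a, -1; 1, 0] * !![0, μ; -ν, b]) =
      !![ν, a * μ - b; 0, μ] from by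
        simp [Matrix.mul_fin_two]; ring]
    simp [Matrix.trace_fin_two_of, hμ, hν]; ring
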